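/- Let 1 ≤ k ≤ n/2 and W(x) := (1-x)^{n-k} V(x) with V a real polynomial of degree at most k, W not identically zero. Then |y^{1/2} W(y)| < ‖u^{1/2} W(u)‖_{[0,1]} for every y ∈ [10(2k+1)/n, 1]. -/

import Mathlib

open Polynomial Set

open Finset in
lemma prod_range_sub_factorial (j : ℕ) :
    ∏ i ∈ Finset.range j, (j - i) = j.factorial := by
  have h := Finset.prod_range_reflect (fun i => i + 1) j
  rw [Finset.prod_range_add_one_eq_factorial] at h
  rw [← h]
  exact Finset.prod_congr rfl fun i hi => by
    rw [Finset.mem_range] at hi; omega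

open Finset in
lemma prod_Ioc_sub_factorial (m j : ℕ) :
    ∏ i ∈ Finset.Ioc j m, (i - j) = (m - j).factorial := by
  rw [← Finset.prod_range_add_one_eq_factorial]
  refine Finset.prod_nbij' (fun i => i - j - 1) (fun d => d + j + 1) ?_ ?_ ?_ ?_ ?_
  · intro i hi; simp only [Finset.mem_Ioc] at hi; simp only [Finset.mem_range]; omega
  · intro d hd; simp only [Finset.mem_range] at hd; simp only [Finset.mem_Ioc]; omega
  · intro i hi; simp only [Finset.mem_Ioc] at hi; omega
  · intro d hd; simp only [Finset.mem_range] at hd; omega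
  · intro i hi; simp only [Finset.mem_Ioc] at hi; omega

lemma erase_range_split (m j : ℕ) (hj : j ≤ m) :
    (Finset.range (m+1)).erase j = Finset.range j ∪ Finset.Ioc j m := by
  ext i
  simp only [Finset.mem_erase, Finset.mem_range, Finset.mem_union, Finset.mem_Ioc]
  omega

lemma prod_abs_nodes (m j : ℕ) (hj : j ≤ m) :
    ∏ i ∈ (Finset.range (m+1)).erase j, |(j:ℝ) - (i:ℝ)|
      = (j.factorial * (m - j).factorial : ℕ) := by
  rw [erase_range_split m j hj, Finset.prod_union]
  · have h1 : ∏ i ∈ Finset.range j, |(j:ℝ) - (i:ℝ)| = ((j.factorial : ℕ) : ℝ) := by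
      rw [← prod_range_sub_factorial j, Nat.cast_prod]
      refine Finset.prod_congr rfl fun i hi => ?_
      rw [Finset.mem_range] at hi
      have hle : (i:ℝ) ≤ j := by exact_mod_cast hi.le
      rw [Nat.cast_sub hi.le, abs_of_nonneg (by linarith)]
    have h2 : ∏ i ∈ Finset.Ioc j m, |(j:ℝ) - (i:ℝ)| = (((m - j).factorial : ℕ) : ℝ) := by
      rw [← prod_Ioc_sub_factorial m j, Nat.cast_prod]
      refine Finset.prod_congr rfl fun i hi => ?_
      rw [Finset.mem_Ioc] at hi
      have hle : (j:ℝ) ≤ i := by exact_mod_cast hi.1.le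
      rw [Nat.cast_sub hi.1.le, abs_sub_comm, abs_of_nonneg (by linarith)]
    rw [h1, h2]; push_cast; ring
  · rw [Finset.disjoint_left]
    intro i hi hi'
    simp only [Finset.mem_range] at hi
    simp only [Finset.mem_Ioc] at hi'
    omega

lemma factorial_lower (m j : ℕ) (hj : j ≤ m) :
    (m.factorial : ℝ) ≤ 2 ^ m * (j.factorial * (m - j).factorial) := by
  have h1 : m.choose j ≤ 2 ^ m := by
    calc m.choose j ≤ ∑ i ∈ Finset.range (m+1), m.choose i :=
          Finset.single_le_sum (f := fun i => m.choose i) (fun i _ => Nat.zero_le _)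
            (Finset.mem_range.mpr (by omega))
      _ = 2 ^ m := Nat.sum_range_choose m
  have h2 : m.factorial = m.choose j * (j.factorial * (m - j).factorial) := by
    rw [← Nat.choose_mul_factorial_mul_factorial hj]; ring
  have := Nat.mul_le_mul_right (j.factorial * (m - j).factorial) h1
  rw [← h2] at this
  exact_mod_cast this

lemma pow_self_le_factorial_mul_exp (m : ℕ) :
    (m : ℝ) ^ m ≤ m.factorial * Real.exp 1 ^ m := by
  induction m with
  | zero => simp
  | succ m ih =>
    have key : ((m:ℝ) + 1) ^ m ≤ (m:ℝ) ^ m * Real.exp 1 := by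
      rcases Nat.eq_zero_or_pos m with hm | hm
      · subst hm
        simpa using Real.one_le_exp (by norm_num)
      · have hmR : (0:ℝ) < m := by exact_mod_cast hm
        have h1 : (1 + 1/(m:ℝ)) ≤ Real.exp (1/(m:ℝ)) := by
          have := Real.add_one_le_exp (1/(m:ℝ)); linarith
        have h2 : (1 + 1/(m:ℝ)) ^ m ≤ Real.exp (1/(m:ℝ)) ^ m :=
          pow_le_pow_left₀ (by positivity) h1 m
        have h3 : Real.exp (1/(m:ℝ)) ^ m = Real.exp 1 := by
          rw [← Real.exp_nat_mul]; congr 1; field_simp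
        have h4 : ((m:ℝ) + 1) ^ m = (m:ℝ) ^ m * (1 + 1/(m:ℝ)) ^ m := by
          rw [← mul_pow]; congr 1; field_simp
        rw [h4]
        rw [h3] at h2
        exact mul_le_mul_of_nonneg_left h2 (by positivity)
    calc ((m+1 : ℕ) : ℝ) ^ (m+1) = ((m:ℝ)+1) * ((m:ℝ)+1) ^ m := by push_cast; ring
      _ ≤ ((m:ℝ)+1) * ((m:ℝ)^m * Real.exp 1) :=
          mul_le_mul_of_nonneg_left key (by positivity)
      _ ≤ ((m:ℝ)+1) * ((↑m.factorial * Real.exp 1 ^ m) * Real.exp 1) := by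
          apply mul_le_mul_of_nonneg_left _ (by positivity)
          exact mul_le_mul_of_nonneg_right ih (Real.exp_pos 1).le
      _ = ↑(m+1).factorial * Real.exp 1 ^ (m+1) := by
          rw [Nat.factorial_succ]; push_cast; ring

lemma exp_aux (h : ℝ) (h0 : 0 ≤ h) (h2 : h ≤ 1/2) :
    Real.exp (2 * Real.log (3/2) * h) ≤ 1 + h := by
  have hc := convexOn_exp.2 (Set.mem_univ (0:ℝ)) (Set.mem_univ (Real.log (3/2)))
    (by linarith : (0:ℝ) ≤ 1 - 2*h) (by linarith : (0:ℝ) ≤ 2*h)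
    (by ring : (1 - 2*h) + 2*h = 1)
  simp only [smul_eq_mul, mul_zero, zero_add, Real.exp_zero] at hc
  rw [Real.exp_log (by norm_num : (0:ℝ) < 3/2)] at hc
  calc Real.exp (2 * Real.log (3/2) * h) = Real.exp (2*h * Real.log (3/2)) := by ring_nf
    _ ≤ (1-2*h) * 1 + 2*h * (3/2) := hc
    _ = 1 + h := by ring

/-- Core lemma: a polynomial `Q` of degree at most `m`, nonnegative on `[t,1]`, cannot have
`s ^ N * Q s` maximized at `t` when `t` is well inside `[0,1]` and `N` is large. -/
lemma core (N m : ℕ) (hm : 1 ≤ m) (Q : Polynomial ℝ) (hQdeg : Q.natDegree ≤ m)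
    (t h : ℝ) (ht : 0 < t) (ht1 : t ≤ 1) (hh : 0 < h) (hh2 : h ≤ 1/2)
    (hNh : 5 * m ≤ (N:ℝ) * h) (hnodes : t + 2*h ≤ 1)
    (hQnn : ∀ s, t ≤ s → s ≤ 1 → 0 ≤ Q.eval s)
    (hmax : ∀ s, t ≤ s → s ≤ 1 → s ^ N * Q.eval s ≤ t ^ N * Q.eval t)
    (hQt : 0 < Q.eval t) : False := by
  have hmR : (0:ℝ) < m := by exact_mod_cast hm
  set δ : ℝ := h / m with hδdef
  have hδ : 0 < δ := by positivity
  set v : ℕ → ℝ := fun j => t + h + j * δ with hv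
  have hvmono : StrictMono v := by
    intro a b hab
    have : (a:ℝ) < b := by exact_mod_cast hab
    simp only [hv]
    nlinarith
  have hinj : Set.InjOn v (Finset.range (m+1) : Set ℕ) := hvmono.injective.injOn
  -- node bounds
  have hvub : ∀ j, j ≤ m → v j ≤ t + 2*h := by
    intro j hj
    have hjR : (j:ℝ) ≤ m := by exact_mod_cast hj
    have : (j:ℝ) * δ ≤ m * δ := by nlinarith
    have hmδ : (m:ℝ) * δ = h := by rw [hδdef]; field_simp
    simp only [hv]; nlinarith
  have hvlb : ∀ j : ℕ, t + h ≤ v j := by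
    intro j
    have : (0:ℝ) ≤ (j:ℝ) * δ := by positivity
    simp only [hv]; linarith
  -- interpolation identity
  have hdeg : Q.degree < (Finset.range (m+1)).card := by
    rw [Finset.card_range]
    exact lt_of_le_of_lt Q.degree_le_natDegree (by exact_mod_cast Nat.lt_succ_of_le hQdeg)
  have hQint := Lagrange.eq_interpolate (v := v) hinj hdeg
  have hQt_eq : Q.eval t = ∑ j ∈ Finset.range (m+1),
      Q.eval (v j) * (Lagrange.basis (Finset.range (m+1)) v j).eval t := by
    conv_lhs => rw [hQint]
    rw [Lagrange.interpolate_apply, Polynomial.eval_finset_sum]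
    exact Finset.sum_congr rfl fun j _ => by rw [Polynomial.eval_mul, Polynomial.eval_C]
  set B : ℝ := (2*m)^m * 2^m / m.factorial with hB
  set D : ℝ := t^N * Q.eval t / (t+h)^N with hD
  have hth : 0 < t + h := by linarith
  have hfacpos : (0:ℝ) < m.factorial := by exact_mod_cast m.factorial_pos
  -- basis bound
  have hbasis : ∀ j ∈ Finset.range (m+1),
      |(Lagrange.basis (Finset.range (m+1)) v j).eval t| ≤ B := by
    intro j hj
    rw [Finset.mem_range] at hj
    have hjm : j ≤ m := by omega
    have hcard : ((Finset.range (m+1)).erase j).card = m := by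
      rw [Finset.card_erase_of_mem (Finset.mem_range.mpr (by omega)), Finset.card_range]
      omega
    have heval : (Lagrange.basis (Finset.range (m+1)) v j).eval t
        = ∏ i ∈ (Finset.range (m+1)).erase j, ((v j - v i)⁻¹ * (t - v i)) := by
      rw [Lagrange.basis, Polynomial.eval_prod]
      exact Finset.prod_congr rfl fun i _ => by
        simp [Lagrange.basisDivisor]
    rw [heval, Finset.abs_prod]
    have hstep : ∀ i ∈ (Finset.range (m+1)).erase j,
        |(v j - v i)⁻¹ * (t - v i)| ≤ (2*h) / (δ * |(j:ℝ) - (i:ℝ)|) := by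
      intro i hi
      rw [Finset.mem_erase, Finset.mem_range] at hi
      have him : i ≤ m := by omega
      have hvdiff : v j - v i = ((j:ℝ) - i) * δ := by simp only [hv]; ring
      have habs : |v j - v i| = |(j:ℝ) - (i:ℝ)| * δ := by
        rw [hvdiff, abs_mul, abs_of_pos hδ]
      have hijne : (0:ℝ) < |(j:ℝ) - (i:ℝ)| := by
        rw [abs_pos, sub_ne_zero]
        intro hc
        exact hi.1 (by exact_mod_cast hc.symm)
      have htv : |t - v i| ≤ 2*h := by
        have h1 := hvlb i
        have h2 := hvub i him
        rw [abs_sub_comm, abs_of_nonneg (by linarith)]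
        linarith
      rw [abs_mul, abs_inv, habs]
      calc (|(j:ℝ) - (i:ℝ)| * δ)⁻¹ * |t - v i| ≤ (|(j:ℝ) - (i:ℝ)| * δ)⁻¹ * (2*h) :=
            mul_le_mul_of_nonneg_left htv (by positivity)
        _ = (2*h) / (δ * |(j:ℝ) - (i:ℝ)|) := by
            rw [div_eq_mul_inv, mul_comm δ _, mul_comm]
    calc ∏ i ∈ (Finset.range (m+1)).erase j, |(v j - v i)⁻¹ * (t - v i)|
        ≤ ∏ i ∈ (Finset.range (m+1)).erase j, (2*h) / (δ * |(j:ℝ) - (i:ℝ)|) :=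
          Finset.prod_le_prod (fun i _ => abs_nonneg _) hstep
      _ = (2*h)^m / (δ^m * ∏ i ∈ (Finset.range (m+1)).erase j, |(j:ℝ) - (i:ℝ)|) := by
          rw [Finset.prod_div_distrib, Finset.prod_const, hcard, Finset.prod_mul_distrib,
            Finset.prod_const, hcard]
      _ = (2*h)^m / (δ^m * (j.factorial * (m-j).factorial : ℕ)) := by
          rw [prod_abs_nodes m j hjm]
      _ ≤ B := by
          rw [hB, div_le_div_iff₀ (by positivity) (by positivity)]
          have hfl := factorial_lower m j hjm
          have hδm : δ^m > 0 := by positivity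
          have h2h : (2*h)^m > 0 := by positivity
          have hkey : (2*h)^m * (m.factorial : ℝ) ≤ (2*h)^m * (2^m * (j.factorial * (m-j).factorial)) :=
            mul_le_mul_of_nonneg_left hfl (by positivity)
          have hδh : δ^m * (2*m)^m = (2*h)^m := by
            rw [← mul_pow]
            congr 1
            rw [hδdef, div_mul_eq_mul_div, div_eq_iff hmR.ne']
            ring
          calc (2*h)^m * (m.factorial : ℝ)
              ≤ (2*h)^m * (2^m * (j.factorial * (m-j).factorial)) := hkey
            _ = (2*m)^m * 2^m * (δ^m * ((j.factorial * (m-j).factorial : ℕ) : ℝ)) := by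
                rw [← hδh]; push_cast; ring
    -- node value bound
  have hval : ∀ j ∈ Finset.range (m+1), Q.eval (v j) ≤ D ∧ 0 ≤ Q.eval (v j) := by
    intro j hj
    rw [Finset.mem_range] at hj
    have hjm : j ≤ m := by omega
    have h1 : t ≤ v j := le_trans (by linarith) (hvlb j)
    have h2 : v j ≤ 1 := le_trans (hvub j hjm) hnodes
    have hnn := hQnn (v j) h1 h2
    refine ⟨?_, hnn⟩
    have hmx := hmax (v j) h1 h2
    have hpow : (t+h)^N ≤ (v j)^N := pow_le_pow_left₀ hth.le (hvlb j) N
    have : Q.eval (v j) * (t+h)^N ≤ t^N * Q.eval t := by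
      calc Q.eval (v j) * (t+h)^N ≤ Q.eval (v j) * (v j)^N :=
            mul_le_mul_of_nonneg_left hpow hnn
        _ = (v j)^N * Q.eval (v j) := by ring
        _ ≤ t^N * Q.eval t := hmx
    rw [hD, le_div_iff₀ (by positivity)]
    exact this
  -- sum bound
  have hDnn : 0 ≤ D := by
    rw [hD]; positivity
  have hBnn : 0 ≤ B := by rw [hB]; positivity
  have hsum : Q.eval t ≤ (m+1 : ℝ) * (D * B) := by
    rw [hQt_eq]
    calc ∑ j ∈ Finset.range (m+1), Q.eval (v j) * (Lagrange.basis (Finset.range (m+1)) v j).eval t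
        ≤ ∑ j ∈ Finset.range (m+1), D * B := by
          refine Finset.sum_le_sum fun j hj => ?_
          obtain ⟨hle, hnn⟩ := hval j hj
          calc Q.eval (v j) * (Lagrange.basis (Finset.range (m+1)) v j).eval t
              ≤ Q.eval (v j) * |(Lagrange.basis (Finset.range (m+1)) v j).eval t| :=
                mul_le_mul_of_nonneg_left (le_abs_self _) hnn
            _ ≤ D * B := mul_le_mul hle (hbasis j hj) (abs_nonneg _) hDnn
      _ = (m+1 : ℝ) * (D * B) := by
          rw [Finset.sum_const, Finset.card_range]; push_cast; ring
  -- numeric contradiction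
  have hexp1 : Real.exp 1 < 2.7182818286 := Real.exp_one_lt_d9
  have hlog : 0 < Real.log (3/2) := Real.log_pos (by norm_num)
  have key2 : ((3:ℝ)/2)^(10*m) ≤ (1+h)^N := by
    have e1 : Real.exp (2 * Real.log (3/2) * h) ^ N ≤ (1+h)^N :=
      pow_le_pow_left₀ (Real.exp_pos _).le (exp_aux h hh.le hh2) N
    have e2 : Real.exp (2 * Real.log (3/2) * h) ^ N
        = Real.exp ((N:ℝ) * (2 * Real.log (3/2) * h)) := (Real.exp_nat_mul _ N).symm
    have e3 : Real.exp (((10*m : ℕ) : ℝ) * Real.log (3/2))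
        ≤ Real.exp ((N:ℝ) * (2 * Real.log (3/2) * h)) := by
      apply Real.exp_le_exp.mpr
      push_cast
      nlinarith
    have e4 : Real.exp (((10*m : ℕ) : ℝ) * Real.log (3/2)) = ((3:ℝ)/2)^(10*m) := by
      rw [Real.exp_nat_mul, Real.exp_log (by norm_num : (0:ℝ) < 3/2)]
    rw [← e4]
    calc Real.exp (((10*m : ℕ) : ℝ) * Real.log (3/2))
        ≤ Real.exp ((N:ℝ) * (2 * Real.log (3/2) * h)) := e3
      _ = Real.exp (2 * Real.log (3/2) * h) ^ N := e2.symm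
      _ ≤ (1+h)^N := e1
  have key3 : ((m:ℝ)+1) * B < ((3:ℝ)/2)^(10*m) := by
    have hm1 : ((m:ℝ)+1) ≤ 2^m := by
      have hnat : m + 1 ≤ 2^m := Nat.lt_two_pow_self
      exact_mod_cast hnat
    have hmm : ((m:ℝ))^m ≤ m.factorial * Real.exp 1 ^ m := pow_self_le_factorial_mul_exp m
    have hBle : B ≤ 4^m * Real.exp 1 ^ m := by
      rw [hB, div_le_iff₀ hfacpos]
      have h4 : (4:ℝ)^m = 2^m * 2^m := by rw [← mul_pow]; norm_num
      have : ((2*m : ℝ))^m * 2^m = 4^m * (m:ℝ)^m := by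
        rw [h4, mul_pow]; ring
      rw [this]
      calc (4:ℝ)^m * (m:ℝ)^m ≤ 4^m * ((m.factorial : ℝ) * Real.exp 1 ^ m) :=
            mul_le_mul_of_nonneg_left hmm (by positivity)
        _ = 4^m * Real.exp 1 ^ m * m.factorial := by ring
    have h8e : ((m:ℝ)+1) * B ≤ (2:ℝ)^m * (4^m * Real.exp 1 ^ m) := by
      calc ((m:ℝ)+1) * B ≤ 2^m * B := mul_le_mul_of_nonneg_right hm1 hBnn
        _ ≤ 2^m * (4^m * Real.exp 1 ^ m) := mul_le_mul_of_nonneg_left hBle (by positivity)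
    have hcomb : (2:ℝ)^m * (4^m * Real.exp 1 ^ m) = (8 * Real.exp 1)^m := by
      have h8 : (8:ℝ)^m = 2^m * 4^m := by rw [← mul_pow]; norm_num
      rw [mul_pow, h8]; ring
    have hstrict : ((8:ℝ) * Real.exp 1)^m < (((3:ℝ)/2)^10)^m := by
      apply pow_lt_pow_left₀ _ (by positivity) (by omega)
      nlinarith
    have hpm : (((3:ℝ)/2)^10)^m = ((3:ℝ)/2)^(10*m) := by
      rw [← pow_mul]
    calc ((m:ℝ)+1) * B ≤ (2:ℝ)^m * (4^m * Real.exp 1 ^ m) := h8e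
      _ = (8 * Real.exp 1)^m := hcomb
      _ < (((3:ℝ)/2)^10)^m := hstrict
      _ = ((3:ℝ)/2)^(10*m) := hpm
  have key1 : t^N * (1+h)^N ≤ (t+h)^N := by
    rw [← mul_pow]
    have hth' : t * (1+h) ≤ t + h := by
      have : t*h ≤ 1*h := mul_le_mul_of_nonneg_right ht1 hh.le
      linarith
    exact pow_le_pow_left₀ (by positivity) hth' N
  have hfinal : ((m:ℝ)+1) * B * t^N < (t+h)^N := by
    have htN : (0:ℝ) < t^N := by positivity
    calc ((m:ℝ)+1) * B * t^N < ((3:ℝ)/2)^(10*m) * t^N :=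
          mul_lt_mul_of_pos_right key3 htN
      _ ≤ (1+h)^N * t^N := mul_le_mul_of_nonneg_right key2 htN.le
      _ = t^N * (1+h)^N := by ring
      _ ≤ (t+h)^N := key1
  have hlast : (m+1 : ℝ) * (D * B) < Q.eval t := by
    have hthN : (0:ℝ) < (t+h)^N := by positivity
    have : (m+1 : ℝ) * (D * B) = (((m:ℝ)+1) * B * t^N / (t+h)^N) * Q.eval t := by
      rw [hD]; field_simp
    rw [this]
    have hlt1 : ((m:ℝ)+1) * B * t^N / (t+h)^N < 1 := (div_lt_one hthN).mpr hfinal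
    calc (((m:ℝ)+1) * B * t^N / (t+h)^N) * Q.eval t < 1 * Q.eval t :=
          mul_lt_mul_of_pos_right hlt1 hQt
      _ = Q.eval t := one_mul _
  linarith

theorem weighted_decay (n k : ℕ) (hk : 1 ≤ k) (hkn : 2 * k ≤ n)
    (V : Polynomial ℝ) (hV : V.natDegree ≤ k)
    (hW : ((1 - X) ^ (n - k) * V : Polynomial ℝ) ≠ 0) :
    ∀ y ∈ Icc (10 * (2 * (k:ℝ) + 1) / (n:ℝ)) 1,
      Real.sqrt y * |((1 - X) ^ (n - k) * V : Polynomial ℝ).eval y| <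
        ⨆ u : Icc (0:ℝ) 1,
          Real.sqrt (u : ℝ) * |((1 - X) ^ (n - k) * V : Polynomial ℝ).eval (u : ℝ)| := by
  intro y hy
  obtain ⟨hya, hy1⟩ := hy
  set W : Polynomial ℝ := (1 - X) ^ (n - k) * V with hWdef
  have hkn' : k ≤ n := by omega
  have hn : 0 < n := by omega
  have hnR : (0:ℝ) < n := by exact_mod_cast hn
  have hkR : (1:ℝ) ≤ k := by exact_mod_cast hk
  have ha : (0:ℝ) < 10 * (2 * (k:ℝ) + 1) / n := by positivity
  have hy0 : 0 < y := lt_of_lt_of_le ha hya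
  have hWeval : ∀ u : ℝ, W.eval u = (1-u)^(n-k) * V.eval u := by
    intro u; simp [hWdef]
  -- continuity and max
  have hgc : Continuous fun u : ℝ => Real.sqrt u * |W.eval u| :=
    Real.continuous_sqrt.mul (continuous_abs.comp (W.continuous_aeval.congr (by simp)))
  obtain ⟨u0, hu0mem, hu0max'⟩ := isCompact_Icc.exists_isMaxOn
    (Set.nonempty_Icc.mpr (by norm_num : (0:ℝ) ≤ 1)) hgc.continuousOn
  have hu0max : ∀ z ∈ Icc (0:ℝ) 1, Real.sqrt z * |W.eval z| ≤ Real.sqrt u0 * |W.eval u0| :=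
    fun z hz => hu0max' hz
  have hbdd : BddAbove (Set.range fun u : Icc (0:ℝ) 1 => Real.sqrt ↑u * |W.eval ↑u|) := by
    refine ⟨Real.sqrt u0 * |W.eval u0|, ?_⟩
    rintro x ⟨u, rfl⟩
    exact hu0max u u.2
  have hS_eq : (⨆ u : Icc (0:ℝ) 1, Real.sqrt ↑u * |W.eval ↑u|) = Real.sqrt u0 * |W.eval u0| := by
    apply le_antisymm
    · exact ciSup_le fun u => hu0max u u.2
    · exact le_ciSup hbdd (⟨u0, hu0mem⟩ : Icc (0:ℝ) 1)
  by_contra hcon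
  push_neg at hcon
  have hall : ∀ u : ℝ, 0 ≤ u → u ≤ 1 → Real.sqrt u * |W.eval u| ≤ Real.sqrt y * |W.eval y| := by
    intro u h0 h1
    calc Real.sqrt u * |W.eval u| ≤ Real.sqrt u0 * |W.eval u0| := hu0max u ⟨h0, h1⟩
      _ = ⨆ u : Icc (0:ℝ) 1, Real.sqrt ↑u * |W.eval ↑u| := hS_eq.symm
      _ ≤ Real.sqrt y * |W.eval y| := hcon
  -- squared version
  have hsqform : ∀ w : ℝ, 0 ≤ w →
      (Real.sqrt w * |W.eval w|) * (Real.sqrt w * |W.eval w|) = w * (W.eval w)^2 := by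
    intro w hw
    rw [show (Real.sqrt w * |W.eval w|) * (Real.sqrt w * |W.eval w|)
        = (Real.sqrt w * Real.sqrt w) * (|W.eval w| * |W.eval w|) from by ring,
      Real.mul_self_sqrt hw, abs_mul_abs_self]
    ring
  have hsq : ∀ u : ℝ, 0 ≤ u → u ≤ 1 → u * (W.eval u)^2 ≤ y * (W.eval y)^2 := by
    intro u h0 h1
    have h := hall u h0 h1
    have hgu : 0 ≤ Real.sqrt u * |W.eval u| := mul_nonneg (Real.sqrt_nonneg _) (abs_nonneg _)
    have := mul_self_le_mul_self hgu h
    rwa [hsqform u h0, hsqform y hy0.le] at this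
  -- setup for core
  set N : ℕ := 2*(n-k) with hNdef
  set m : ℕ := 2*k+1 with hmdef
  set t : ℝ := 1 - y with htdef
  set Q : Polynomial ℝ := (1 - X) * (V.comp (1 - X))^2 with hQdef
  have hQeval : ∀ s : ℝ, Q.eval s = (1-s) * (V.eval (1-s))^2 := by
    intro s
    simp [hQdef, Polynomial.eval_comp]
  have hkey : ∀ s : ℝ, s^N * Q.eval s = (1-s) * (W.eval (1-s))^2 := by
    intro s
    rw [hQeval, hWeval, show (1:ℝ) - (1-s) = s from by ring, mul_pow, ← pow_mul,
      show (n-k)*2 = N from by omega]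
    ring
  have ht_eq : t^N * Q.eval t = y * (W.eval y)^2 := by
    rw [hkey t, show (1:ℝ) - t = y from by rw [htdef]; ring]
  -- positivity of the max value
  have hVne : V ≠ 0 := fun hV0 => hW (by rw [hWdef, hV0, mul_zero])
  have hfin : {x : ℝ | V.IsRoot x}.Finite := V.finite_setOf_isRoot hVne
  have hinf : (Set.Ioo (0:ℝ) 1).Infinite := Set.Ioo_infinite (by norm_num)
  obtain ⟨u₁, hu₁⟩ := (hinf.diff hfin).nonempty
  obtain ⟨hu₁mem, hu₁root⟩ := hu₁
  have hWu₁ : W.eval u₁ ≠ 0 := by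
    rw [hWeval]
    apply mul_ne_zero
    · exact pow_ne_zero _ (by simp only [Set.mem_Ioo] at hu₁mem; intro hc; linarith [hu₁mem.2, sub_eq_zero.mp hc])
    · exact hu₁root
  have hu₁pos : 0 < u₁ * (W.eval u₁)^2 := by
    simp only [Set.mem_Ioo] at hu₁mem
    have := hu₁mem.1
    positivity
  have hpos : 0 < t^N * Q.eval t := by
    rw [ht_eq]
    exact lt_of_lt_of_le hu₁pos (by
      simp only [Set.mem_Ioo] at hu₁mem
      exact hsq u₁ hu₁mem.1.le hu₁mem.2.le)
  have ht0 : 0 ≤ t := by rw [htdef]; linarith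
  have hNpos : N ≠ 0 := by omega
  have ht : 0 < t := by
    rcases ht0.lt_or_eq with h | h
    · exact h
    · exfalso
      rw [← h, zero_pow hNpos, zero_mul] at hpos
      exact lt_irrefl 0 hpos
  have hQt : 0 < Q.eval t := by
    have htN : (0:ℝ) < t^N := by positivity
    by_contra hc
    push_neg at hc
    nlinarith
  -- degree bound
  have hQdeg : Q.natDegree ≤ m := by
    have h1 : (1 - X : Polynomial ℝ).natDegree ≤ 1 := by
      refine le_trans (Polynomial.natDegree_sub_le _ _) ?_
      simp [Polynomial.natDegree_one, Polynomial.natDegree_X]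
    have h2 : (V.comp (1 - X)).natDegree ≤ k := by
      refine le_trans (Polynomial.natDegree_comp_le) ?_
      calc V.natDegree * (1 - X : Polynomial ℝ).natDegree ≤ k * 1 :=
            Nat.mul_le_mul hV h1
        _ = k := by omega
    calc Q.natDegree ≤ (1 - X : Polynomial ℝ).natDegree + ((V.comp (1 - X))^2).natDegree :=
          Polynomial.natDegree_mul_le
      _ ≤ 1 + 2 * k := by
          rw [Polynomial.natDegree_pow]
          omega
      _ = m := by omega
  -- apply core
  refine core N m (by omega) Q hQdeg t (y/2) ht (by rw [htdef]; linarith) (by linarith)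
    (by linarith) ?_ (by rw [htdef]; linarith) ?_ ?_ hQt
  · -- 5 * m ≤ N * (y/2)
    have hNcast : (N:ℝ) = 2*((n:ℝ) - k) := by
      rw [hNdef]
      push_cast [Nat.cast_sub hkn']
      ring
    have hmcast : (m:ℝ) = 2*(k:ℝ)+1 := by rw [hmdef]; push_cast; ring
    rw [hNcast, hmcast]
    have hnk2 : (n:ℝ)/2 ≤ (n:ℝ) - k := by
      have : (2*k : ℝ) ≤ n := by exact_mod_cast hkn
      linarith
    have hya' : 10 * (2 * (k:ℝ) + 1) / n ≤ y := hya
    have h1 : ((n:ℝ) - k) * y ≥ ((n:ℝ)/2) * (10 * (2 * (k:ℝ) + 1) / n) := by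
      apply mul_le_mul hnk2 hya' (by positivity) (by linarith)
    have h2 : ((n:ℝ)/2) * (10 * (2 * (k:ℝ) + 1) / n) = 5 * (2*(k:ℝ)+1) := by
      field_simp
      ring
    nlinarith
  · -- nonnegativity
    intro s hts hs1
    rw [hQeval]
    exact mul_nonneg (by linarith) (sq_nonneg _)
  · -- max property
    intro s hts hs1
    rw [hkey s, ht_eq]
    have h1s : 0 ≤ 1 - s := by linarith
    have h1s' : 1 - s ≤ 1 := by
      have : t ≥ 0 := ht.le
      rw [htdef] at hts
      linarith
    exact hsq (1-s) h1s h1s'
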